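/- Let F₀ be a real number with 1/2 < F₀ < 1 and define the purification fidelity sequence by F_n = F_{n-1}² / (F_{n-1}² + (1 - F_{n-1})²) for n ≥ 1. Then F_n tends to 1 as n tends to infinity. -/

import Mathlib

open Filter

/-- The purification fidelity sequence starting from `F 0` with `1/2 < F 0 < 1`
tends to `1`. -/
theorem purification_tendsto_one (F : ℕ → ℝ)
    (h0 : 1 / 2 < F 0) (h1 : F 0 < 1)
    (hrec : ∀ n : ℕ, F (n + 1) = (F n) ^ 2 / ((F n) ^ 2 + (1 - F n) ^ 2)) :
    Tendsto F atTop (nhds 1) := by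
  set c : ℝ := 2 * (1 - F 0) with hc
  have hc0 : 0 < c := by rw [hc]; linarith
  have hc1 : c < 1 := by rw [hc]; linarith
  have key : ∀ n : ℕ, 1/2 < F n ∧ F n < 1 ∧ 1 - F n ≤ (1 - F 0) * c ^ n := by
    intro n
    induction n with
    | zero => refine ⟨h0, h1, by simp⟩
    | succ n ih =>
      obtain ⟨ha, hb, he⟩ := ih
      have hD : (0:ℝ) < (F n) ^ 2 + (1 - F n) ^ 2 := by nlinarith
      have hDhalf : (1:ℝ)/2 ≤ (F n) ^ 2 + (1 - F n) ^ 2 := by nlinarith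
      have h1e : 1 - F (n+1) = (1 - F n) ^ 2 / ((F n) ^ 2 + (1 - F n) ^ 2) := by
        rw [hrec n]; field_simp; ring
      have hcn : (0:ℝ) ≤ c ^ n := le_of_lt (pow_pos hc0 n)
      have hFn0 : 1 - F n ≤ 1 - F 0 := by
        calc 1 - F n ≤ (1 - F 0) * c ^ n := he
          _ ≤ (1 - F 0) * 1 := by
              apply mul_le_mul_of_nonneg_left _ (by linarith)
              exact pow_le_one₀ (le_of_lt hc0) (le_of_lt hc1)
          _ = 1 - F 0 := mul_one _
      refine ⟨?_, ?_, ?_⟩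
      · rw [hrec n]
        rw [lt_div_iff₀ hD]
        nlinarith
      · rw [hrec n]
        rw [div_lt_one hD]
        nlinarith
      · rw [h1e]
        rw [div_le_iff₀ hD]
        have : (1 - F n) ^ 2 ≤ 2 * (1 - F n) ^ 2 * ((F n) ^ 2 + (1 - F n) ^ 2) := by
          nlinarith
        have h2 : 2 * (1 - F n) ^ 2 ≤ (1 - F 0) * c ^ (n+1) := by
          have : 2 * (1 - F n) * (1 - F n) ≤ 2 * (1 - F 0) * ((1 - F 0) * c ^ n) := by
            apply mul_le_mul (by linarith) he (by linarith) (by linarith)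
          calc 2 * (1 - F n) ^ 2 = 2 * (1 - F n) * (1 - F n) := by ring
            _ ≤ 2 * (1 - F 0) * ((1 - F 0) * c ^ n) := this
            _ = (1 - F 0) * c ^ (n+1) := by rw [hc]; ring
        nlinarith
  have hgeo : Tendsto (fun n => (1 - F 0) * c ^ n) atTop (nhds 0) := by
    have := tendsto_pow_atTop_nhds_zero_of_lt_one (le_of_lt hc0) hc1
    simpa using this.const_mul (1 - F 0)
  have h1F : Tendsto (fun n => 1 - F n) atTop (nhds 0) := by
    apply squeeze_zero (fun n => by linarith [(key n).2.1]) (fun n => (key n).2.2) hgeo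
  have := h1F.const_sub 1
  simpa using this
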